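/- If G is a stepwise irregular graph with at least one edge, then the subdivision graph S(G) is not stepwise irregular. -/

import Mathlib

open SimpleGraph

noncomputable def deg {V : Type*} (G : SimpleGraph V) (v : V) : ℕ := (G.neighborSet v).ncard

/-- A graph is stepwise irregular if for every edge the endpoint degrees differ by exactly 1. -/
def SI {V : Type*} (G : SimpleGraph V) : Prop :=
  ∀ u v, G.Adj u v → |(deg G u : ℤ) - (deg G v : ℤ)| = 1

/-- The subdivision graph: insert a new vertex of degree 2 on each edge. -/
def subdivision {V : Type*} (G : SimpleGraph V) : SimpleGraph (V ⊕ G.edgeSet) where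
  Adj a b :=
    match a, b with
    | Sum.inl v, Sum.inr e => v ∈ (e : Sym2 V)
    | Sum.inr e, Sum.inl v => v ∈ (e : Sym2 V)
    | _, _ => False
  symm := ⟨by rintro (v|e) (w|f) h <;> simp_all⟩
  loopless := ⟨by rintro (v|e) h <;> simp_all⟩

lemma deg_inr {V : Type*} (G : SimpleGraph V) (e : G.edgeSet) :
    deg (subdivision G) (Sum.inr e) = 2 := by
  obtain ⟨e, he⟩ := e
  induction e with
  | h u v =>
    have hne : u ≠ v := (G.ne_of_adj (by exact he))
    have hset : (subdivision G).neighborSet (Sum.inr ⟨s(u,v), he⟩) =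
        {Sum.inl u, Sum.inl v} := by
      ext a
      cases a with
      | inl w =>
        simp [neighborSet, subdivision, Sym2.mem_iff]
      | inr f =>
        simp [neighborSet, subdivision]
    rw [deg, hset, Set.ncard_pair (by simpa using hne)]

noncomputable def degEquiv {V : Type*} (G : SimpleGraph V) (v : V) :
    (G.neighborSet v) ≃ ((subdivision G).neighborSet (Sum.inl v)) where
  toFun := fun w => ⟨Sum.inr ⟨s(v, w.1), w.2⟩, by
    show v ∈ (s(v, w.1) : Sym2 V); simp⟩
  invFun := fun x => match x with
    | ⟨Sum.inl w, h⟩ => absurd h (by simp [neighborSet, subdivision])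
    | ⟨Sum.inr e, h⟩ =>
        ⟨Sym2.Mem.other (by exact h), by
          have hsp := Sym2.other_spec (show v ∈ (e : Sym2 V) from h)
          have : s(v, Sym2.Mem.other (show v ∈ (e : Sym2 V) from h)) ∈ G.edgeSet := by
            rw [hsp]; exact e.2
          exact this⟩
  left_inv := by
    rintro ⟨w, hw⟩
    ext
    simp only
    have hsp := Sym2.other_spec (show v ∈ (s(v,w) : Sym2 V) by simp)
    exact Sym2.congr_right.mp hsp
  right_inv := by
    rintro ⟨(w | e), h⟩
    · exact absurd h (by simp [neighborSet, subdivision])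
    · ext
      simp only
      congr 1
      exact Subtype.ext (Sym2.other_spec (show v ∈ (e : Sym2 V) from h))

lemma deg_inl {V : Type*} (G : SimpleGraph V) (v : V) :
    deg (subdivision G) (Sum.inl v) = deg G v := by
  rw [deg, deg, ← Nat.card_coe_set_eq, ← Nat.card_coe_set_eq]
  exact (Nat.card_congr (degEquiv G v)).symm

theorem stmt_9 {V : Type*} [Fintype V] (G : SimpleGraph V) (hSI : SI G)
    (he : G.edgeSet.Nonempty) :
    ¬ SI (subdivision G) := by
  obtain ⟨e, heE⟩ := he
  intro hS
  induction e with
  | h u v =>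
    have hadj : G.Adj u v := heE
    have h1 := hSI u v hadj
    have hu : (subdivision G).Adj (Sum.inl u) (Sum.inr ⟨s(u,v), heE⟩) := by
      show u ∈ (s(u,v) : Sym2 V); simp
    have hv : (subdivision G).Adj (Sum.inl v) (Sum.inr ⟨s(u,v), heE⟩) := by
      show v ∈ (s(u,v) : Sym2 V); simp
    have h2 := hS _ _ hu
    have h3 := hS _ _ hv
    rw [deg_inl, deg_inr] at h2 h3
    rw [abs_eq (by norm_num)] at h1 h2 h3
    omega
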